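/- With the notation of the preceding setup (g, h indicators of [0,τ) and [0,τ⁰) on [0,T], v = (τ-τ⁰)/T, u(t) = ∫_0^t (g - h - v)), one has ∫_0^T u(t)² dt ≤ (T²/3) ∫_0^T v² dt = (T³/3) v². -/

import Mathlib

open Set intervalIntegral
open MeasureTheory (volume measure_mono setIntegral_indicator setIntegral_const integrable_indicator_iff integrableOn_const)

lemma aux_poly (a b p q : ℝ) :
    ∫ t in a..b, (p + q*t)^2 = p^2*(b-a) + p*q*(b^2-a^2) + q^2*(b^3-a^3)/3 := by
  have h : (fun t : ℝ => (p + q*t)^2) = fun t => p^2 + ((2*p*q)*t + q^2*t^2) := by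
    ext t; ring
  rw [h, integral_add, integral_add,
      integral_const, integral_const_mul,
      integral_const_mul, integral_id]
  · rw [show (∫ t in a..b, t^2) = (b^3-a^3)/3 by
      rw [integral_pow]; norm_num]
    simp only [smul_eq_mul]; ring
  · exact (continuous_const.mul continuous_id).intervalIntegrable a b
  · exact (continuous_const.mul (continuous_pow 2)).intervalIntegrable a b
  · exact continuous_const.intervalIntegrable a b
  · exact ((continuous_const.mul continuous_id).add
      (continuous_const.mul (continuous_pow 2))).intervalIntegrable a b

lemma aux_ind_integrable (a x y : ℝ) :
    IntervalIntegrable (Set.indicator (Set.Ico (0:ℝ) a) (fun _ => (1:ℝ))) volume x y := by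
  apply MeasureTheory.Integrable.intervalIntegrable
  rw [integrable_indicator_iff measurableSet_Ico]
  exact integrableOn_const (by rw [Real.volume_Ico]; exact ENNReal.ofReal_ne_top)

lemma aux_ind_int (a t : ℝ) (ha : 0 ≤ a) (ht : 0 ≤ t) :
    ∫ s in (0:ℝ)..t, Set.indicator (Set.Ico (0:ℝ) a) (fun _ => (1:ℝ)) s = min t a := by
  rw [integral_of_le ht, setIntegral_indicator measurableSet_Ico,
      setIntegral_const]
  have h1 : Ioo (0:ℝ) (min t a) ⊆ Ioc 0 t ∩ Ico 0 a := by
    intro x hx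
    simp only [mem_Ioo, lt_min_iff] at hx
    exact ⟨⟨hx.1, hx.2.1.le⟩, ⟨hx.1.le, hx.2.2⟩⟩
  have h2 : Ioc (0:ℝ) t ∩ Ico 0 a ⊆ Icc 0 (min t a) := by
    intro x ⟨hx1, hx2⟩
    exact ⟨hx1.1.le, le_min hx1.2 hx2.2.le⟩
  have hm : volume (Ioc (0:ℝ) t ∩ Ico 0 a) = ENNReal.ofReal (min t a) := by
    refine le_antisymm ?_ ?_
    · calc volume (Ioc (0:ℝ) t ∩ Ico 0 a) ≤ volume (Icc (0:ℝ) (min t a)) := measure_mono h2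
        _ = ENNReal.ofReal (min t a) := by rw [Real.volume_Icc, sub_zero]
    · calc ENNReal.ofReal (min t a) = volume (Ioo (0:ℝ) (min t a)) := by
            rw [Real.volume_Ioo, sub_zero]
        _ ≤ _ := measure_mono h1
  rw [MeasureTheory.measureReal_def, hm, ENNReal.toReal_ofReal (le_min ht ha), smul_eq_mul, mul_one]

lemma aux_main (T s τ : ℝ) (hT : 0 < T) (hs : 0 ≤ s) (hsτ : s ≤ τ) (hτT : τ ≤ T) :
    (∫ t in (0:ℝ)..T, (min t τ - min t s - ((τ-s)/T)*t)^2)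
      ≤ T^3/3 * ((τ-s)/T)^2 := by
  set w : ℝ := (τ-s)/T with hw
  have hc : Continuous fun t : ℝ => (min t τ - min t s - w*t)^2 :=
    (((continuous_id.min continuous_const).sub (continuous_id.min continuous_const)).sub
      (continuous_const.mul continuous_id)).pow 2
  have h0s : (0:ℝ) ≤ s := hs
  have hsplit :
      (∫ t in (0:ℝ)..T, (min t τ - min t s - w*t)^2)
        = (∫ t in (0:ℝ)..s, (min t τ - min t s - w*t)^2)
          + ((∫ t in s..τ, (min t τ - min t s - w*t)^2)
            + (∫ t in τ..T, (min t τ - min t s - w*t)^2)) := by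
    rw [integral_add_adjacent_intervals
        (hc.intervalIntegrable s τ) (hc.intervalIntegrable τ T),
      integral_add_adjacent_intervals
        (hc.intervalIntegrable 0 s) (hc.intervalIntegrable s T)]
  rw [hsplit]
  have e1 : (∫ t in (0:ℝ)..s, (min t τ - min t s - w*t)^2)
      = ∫ t in (0:ℝ)..s, (0 + (-w)*t)^2 := by
    apply integral_congr
    intro t ht
    rw [uIcc_of_le h0s] at ht
    simp only
    rw [min_eq_left (ht.2.trans hsτ), min_eq_left ht.2]
    ring
  have e2 : (∫ t in s..τ, (min t τ - min t s - w*t)^2)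
      = ∫ t in s..τ, ((-s) + (1-w)*t)^2 := by
    apply integral_congr
    intro t ht
    rw [uIcc_of_le hsτ] at ht
    simp only
    rw [min_eq_left ht.2, min_eq_right ht.1]
    ring
  have e3 : (∫ t in τ..T, (min t τ - min t s - w*t)^2)
      = ∫ t in τ..T, ((τ-s) + (-w)*t)^2 := by
    apply integral_congr
    intro t ht
    rw [uIcc_of_le hτT] at ht
    simp only
    rw [min_eq_right ht.1, min_eq_right (hsτ.trans ht.1)]
    ring
  rw [e1, e2, e3, aux_poly, aux_poly, aux_poly]
  have hb : 0 ≤ T*(2*τ+s) - (τ^2+τ*s+s^2) := by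
    nlinarith [mul_nonneg (sub_nonneg.2 hτT) (by linarith : (0:ℝ) ≤ 2*τ+s),
      mul_nonneg (sub_nonneg.2 hsτ) (by linarith : (0:ℝ) ≤ τ+s)]
  have key : T^3/3 * w^2
      - ((0^2*(s-0) + 0*(-w)*(s^2-0^2) + (-w)^2*(s^3-0^3)/3)
        + (((-s)^2*(τ-s) + (-s)*(1-w)*(τ^2-s^2) + (1-w)^2*(τ^3-s^3)/3)
          + ((τ-s)^2*(T-τ) + (τ-s)*(-w)*(T^2-τ^2) + (-w)^2*(T^3-τ^3)/3)))
      = (τ-s)^2 * (T*(2*τ+s) - (τ^2+τ*s+s^2)) / (3*T) := by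
    rw [hw]
    field_simp
    ring
  have hnn : 0 ≤ (τ-s)^2 * (T*(2*τ+s) - (τ^2+τ*s+s^2)) / (3*T) :=
    div_nonneg (mul_nonneg (sq_nonneg _) hb) (by linarith)
  linarith


/-- With `g`, `h` the indicators of `[0,τ)` and `[0,τ⁰)` on `[0,T]`, `v = (τ-τ⁰)/T`, and
`u(t) = ∫_0^t (g - h - v)`, one has `∫_0^T u² ≤ (T²/3) ∫_0^T v² = (T³/3) v²`. -/
theorem stmt_13 (T τ τ0 : ℝ) (hT : 0 < T)
    (hτ : τ ∈ Set.Icc 0 T) (hτ0 : τ0 ∈ Set.Icc 0 T)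
    (g h : ℝ → ℝ)
    (hg : g = Set.indicator (Set.Ico (0 : ℝ) τ) (fun _ => (1 : ℝ)))
    (hh : h = Set.indicator (Set.Ico (0 : ℝ) τ0) (fun _ => (1 : ℝ)))
    (v : ℝ) (hv : v = (τ - τ0) / T)
    (u : ℝ → ℝ)
    (hu : ∀ t : ℝ, u t = ∫ s in (0 : ℝ)..t, (g s - h s - v)) :
    (∫ t in (0 : ℝ)..T, (u t) ^ 2) ≤ (T ^ 2 / 3) * ∫ t in (0 : ℝ)..T, v ^ 2
      ∧ (T ^ 2 / 3) * (∫ t in (0 : ℝ)..T, v ^ 2) = (T ^ 3 / 3) * v ^ 2 := by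
  have hT0 : (0:ℝ) ≤ T := hT.le
  have hvint : (∫ t in (0 : ℝ)..T, v ^ 2) = T * v^2 := by
    rw [integral_const, smul_eq_mul, sub_zero]
  have hrw : ∀ t ∈ Icc (0:ℝ) T, u t = min t τ - min t τ0 - v*t := by
    intro t ht
    rw [hu t, hg, hh]
    rw [integral_sub (((aux_ind_integrable τ 0 t).sub (aux_ind_integrable τ0 0 t)))
        (continuous_const.intervalIntegrable 0 t),
      integral_sub (aux_ind_integrable τ 0 t) (aux_ind_integrable τ0 0 t),
      integral_const, smul_eq_mul, sub_zero]
    rw [aux_ind_int τ t hτ.1 ht.1, aux_ind_int τ0 t hτ0.1 ht.1]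
    ring
  have husq : (∫ t in (0 : ℝ)..T, (u t) ^ 2)
      = ∫ t in (0 : ℝ)..T, (min t τ - min t τ0 - v*t)^2 := by
    apply integral_congr
    intro t ht
    rw [uIcc_of_le hT0] at ht
    simp only
    rw [hrw t ht]
  constructor
  · rw [husq, hvint]
    rcases le_total τ0 τ with hc | hc
    · have h1 := aux_main T τ0 τ hT hτ0.1 hc hτ.2
      calc (∫ t in (0:ℝ)..T, (min t τ - min t τ0 - v*t)^2)
          = ∫ t in (0:ℝ)..T, (min t τ - min t τ0 - ((τ-τ0)/T)*t)^2 := by rw [hv]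
        _ ≤ T^3/3 * ((τ-τ0)/T)^2 := h1
        _ = T^2/3 * (T*v^2) := by rw [hv]; ring
    · have h2 := aux_main T τ τ0 hT hτ.1 hc hτ0.2
      have hfun : (fun t => (min t τ - min t τ0 - v*t)^2)
          = fun t => (min t τ0 - min t τ - ((τ0-τ)/T)*t)^2 := by
        ext t; rw [hv]; ring
      calc (∫ t in (0:ℝ)..T, (min t τ - min t τ0 - v*t)^2)
          = ∫ t in (0:ℝ)..T, (min t τ0 - min t τ - ((τ0-τ)/T)*t)^2 := by rw [hfun]
        _ ≤ T^3/3 * ((τ0-τ)/T)^2 := h2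
        _ = T^2/3 * (T*v^2) := by rw [hv]; ring
  · rw [hvint]; ring
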